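/- In the ring R = ℤ[X]/(X² − 2X, 8X), let x denote the image of X. The ideal generated by 2x is, as an abelian group, cyclic of order 4, and the quotient of this ideal by the ideal generated by 8x is isomorphic to ℤ/4ℤ. -/

import Mathlib

set_option linter.unnecessarySeqFocus false

open Polynomial

private noncomputable abbrev Jaux : Ideal ℤ[X] :=
  Ideal.span ({X ^ 2 - 2 * X, 8 * X} : Set ℤ[X])

private lemma hx2aux :
    Ideal.Quotient.mk Jaux X * Ideal.Quotient.mk Jaux X = 2 * Ideal.Quotient.mk Jaux X := by
  have h : Ideal.Quotient.mk Jaux (X ^ 2 - 2 * X) = 0 :=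
    Ideal.Quotient.eq_zero_iff_mem.mpr (Ideal.subset_span (by simp))
  have := sub_eq_zero.mp (by simpa using h)
  simpa [pow_two, map_ofNat] using this

private lemma h8aux : (8 : ℤ[X] ⧸ Jaux) * Ideal.Quotient.mk Jaux X = 0 := by
  have h : Ideal.Quotient.mk Jaux (8 * X) = 0 :=
    Ideal.Quotient.eq_zero_iff_mem.mpr (Ideal.subset_span (by simp))
  simpa [map_ofNat] using h

private lemma claimaux (p : ℤ[X]) : ∃ n : ℤ,
    Ideal.Quotient.mk Jaux p * (2 * Ideal.Quotient.mk Jaux X)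
      = (n : ℤ[X] ⧸ Jaux) * (2 * Ideal.Quotient.mk Jaux X) := by
  set K := Ideal.Quotient.mk Jaux
  induction p using Polynomial.induction_on with
  | C a => exact ⟨a, by rw [show (C a : ℤ[X]) = (a : ℤ[X]) by simp, map_intCast]⟩
  | add p q hp hq =>
    obtain ⟨m, hm⟩ := hp; obtain ⟨n, hn⟩ := hq
    exact ⟨m + n, by push_cast; rw [map_add, add_mul, hm, hn, add_mul]⟩
  | monomial n a ih =>
    obtain ⟨m, hm⟩ := ih
    refine ⟨2 * m, ?_⟩
    have : K (C a * X ^ (n + 1)) = K (C a * X ^ n) * K X := by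
      rw [← map_mul]; ring_nf
    rw [this]
    calc K (C a * X ^ n) * K X * (2 * K X)
        = K (C a * X ^ n) * (2 * (K X * K X)) := by ring
      _ = K (C a * X ^ n) * (2 * (2 * K X)) := by rw [hx2aux]
      _ = (K (C a * X ^ n) * (2 * K X)) * 2 := by ring
      _ = ((m : ℤ[X] ⧸ Jaux) * (2 * K X)) * 2 := by rw [hm]
      _ = ((2 * m : ℤ) : ℤ[X] ⧸ Jaux) * (2 * K X) := by push_cast; ring

private noncomputable abbrev φaux : (ℤ[X] ⧸ Jaux) →+* ZMod 16 :=
  Ideal.Quotient.lift Jaux (eval₂RingHom (Int.castRingHom (ZMod 16)) 2) (by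
    intro a ha
    have h : Jaux ≤ RingHom.ker (eval₂RingHom (Int.castRingHom (ZMod 16)) 2) :=
      Ideal.span_le.mpr (by rintro q (rfl | rfl) <;> simp [RingHom.mem_ker] <;> decide)
    exact h ha)

private lemma φaux_x : φaux (Ideal.Quotient.mk Jaux X) = 2 := by
  erw [Ideal.Quotient.lift_mk]; simp

private lemma h4neaux : (2 : ℕ) • (2 * Ideal.Quotient.mk Jaux X) ≠ 0 := by
  intro h
  have := congrArg φaux h
  rw [map_nsmul, map_mul, map_ofNat, φaux_x, map_zero] at this
  exact absurd this (by decide)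

private lemma hordaux : addOrderOf (2 * Ideal.Quotient.mk Jaux X) = 4 := by
  have h2 : Fact (Nat.Prime 2) := ⟨Nat.prime_two⟩
  have hfin : (2 : ℕ) ^ (1 + 1) • (2 * Ideal.Quotient.mk Jaux X) = 0 := by
    have : ((2 : ℕ) ^ (1 + 1) : ℕ) • (2 * Ideal.Quotient.mk Jaux X)
        = (8 : ℤ[X] ⧸ Jaux) * Ideal.Quotient.mk Jaux X := by
      push_cast [nsmul_eq_mul]; ring
    rw [this, h8aux]
  have hnot : ¬ (2 : ℕ) ^ 1 • (2 * Ideal.Quotient.mk Jaux X) = 0 := by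
    simpa using h4neaux
  simpa using addOrderOf_eq_prime_pow hnot hfin

private lemma hspanaux :
    (Ideal.span ({2 * Ideal.Quotient.mk Jaux X} : Set (ℤ[X] ⧸ Jaux))).toAddSubgroup
      = AddSubgroup.zmultiples (2 * Ideal.Quotient.mk Jaux X) := by
  ext a
  rw [Submodule.mem_toAddSubgroup, Ideal.mem_span_singleton, AddSubgroup.mem_zmultiples_iff]
  constructor
  · rintro ⟨r, rfl⟩
    obtain ⟨p, rfl⟩ := Ideal.Quotient.mk_surjective r
    obtain ⟨n, hn⟩ := claimaux p
    exact ⟨n, by rw [zsmul_eq_mul, ← hn]; ring⟩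
  · rintro ⟨n, rfl⟩
    exact ⟨n, by rw [zsmul_eq_mul]; ring⟩

private noncomputable def eaux :
    (Ideal.span ({2 * Ideal.Quotient.mk Jaux X} : Set (ℤ[X] ⧸ Jaux))).toAddSubgroup ≃+ ZMod 4 := by
  have hker : (zmultiplesHom _ (2 * Ideal.Quotient.mk Jaux X)).ker
      = AddSubgroup.zmultiples ((4 : ℕ) : ℤ) := by
    rw [zmultiplesHom_ker_eq, hordaux]
  have hrange : (zmultiplesHom _ (2 * Ideal.Quotient.mk Jaux X)).range
      = AddSubgroup.zmultiples (2 * Ideal.Quotient.mk Jaux X) := by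
    ext a
    simp [AddMonoidHom.mem_range, AddSubgroup.mem_zmultiples_iff, eq_comm]
  exact (AddEquiv.addSubgroupCongr (hspanaux.trans hrange.symm)).trans <|
    (QuotientAddGroup.quotientKerEquivRange _).symm.trans <|
    (QuotientAddGroup.quotientAddEquivOfEq hker).trans <|
    Int.quotientZMultiplesNatEquivZMod 4

open Polynomial in
theorem stmt_11 :
    let R := ℤ[X] ⧸ Ideal.span ({X ^ 2 - 2 * X, 8 * X} : Set ℤ[X])
    let x : R := Ideal.Quotient.mk _ X
    Nonempty ((Ideal.span ({2 * x} : Set R)) ≃+ ZMod 4) ∧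
    Nonempty (((Ideal.span ({2 * x} : Set R)).toAddSubgroup ⧸
        ((Ideal.span ({8 * x} : Set R)).toAddSubgroup.addSubgroupOf
          (Ideal.span ({2 * x} : Set R)).toAddSubgroup)) ≃+ ZMod 4) := by
  intro R x
  have jcoe : (Ideal.span ({2 * x} : Set R)) ≃+
      (Ideal.span ({2 * x} : Set R)).toAddSubgroup :=
    { toFun := fun a => ⟨a.1, a.2⟩
      invFun := fun a => ⟨a.1, a.2⟩
      left_inv := fun a => rfl
      right_inv := fun a => rfl
      map_add' := fun a b => rfl }
  have h8span : (Ideal.span ({8 * x} : Set R)) = ⊥ := by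
    rw [Ideal.span_singleton_eq_bot]
    simpa using h8aux
  have hbot : ((Ideal.span ({8 * x} : Set R)).toAddSubgroup.addSubgroupOf
      (Ideal.span ({2 * x} : Set R)).toAddSubgroup) = ⊥ := by
    rw [h8span]
    have : (⊥ : Ideal R).toAddSubgroup = (⊥ : AddSubgroup R) := by
      ext a; simp
    rw [this, AddSubgroup.bot_addSubgroupOf]
  refine ⟨⟨jcoe.trans eaux⟩, ⟨?_⟩⟩
  exact (QuotientAddGroup.quotientAddEquivOfEq hbot).trans <|
    QuotientAddGroup.quotientBot.trans eaux
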